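/- arXiv:0904.4356 — 5 statements merged into one kernel-verified Lean document; each statement's English description precedes it below -/
import Mathlib

section
/- Let (X, d) be a nonempty metric space. Then t₀(X) = inf { s(x,y,z) : x, y, z ∈ X }, where t₀(X) is the betweenness exponent and s(x,y,z) is defined to be the unique root s₀ ∈ [1,∞) of d(x,z)^s + d(z,y)^s = d(x,y)^s when max(d(x,z), d(z,y)) < d(x,y), and +∞ otherwise. -/
open Real

/-- The betweenness exponent `t₀(X)`: the supremum (in `ℝ≥0∞`) of all `t > 0`
such that `(x,y) ↦ d(x,y)^t` is a metric (satisfies the triangle inequality)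
on `X`. -/
noncomputable def betweennessExponent (X : Type*) [MetricSpace X] : ENNReal :=
  sSup (ENNReal.ofReal ''
    {t : ℝ | 0 < t ∧ ∀ x y z : X, dist x y ^ t ≤ dist x z ^ t + dist z y ^ t})

/-- Monotone comparison: if `a^r + b^r = c^r` with `0 < a,b < c` and `0 ≤ t ≤ r`,
then `c^t ≤ a^t + b^t`. -/
lemma key_le {a b c r t : ℝ} (ha : 0 < a) (hb : 0 < b) (hac : a < c) (hbc : b < c)
    (_ht : 0 ≤ t) (htr : t ≤ r) (heq : a ^ r + b ^ r = c ^ r) :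
    c ^ t ≤ a ^ t + b ^ t := by
  have hc : 0 < c := lt_trans ha hac
  have hct : (0:ℝ) < c ^ t := Real.rpow_pos_of_pos hc t
  have hcr : (0:ℝ) < c ^ r := Real.rpow_pos_of_pos hc r
  have h1 : (a / c) ^ r + (b / c) ^ r = 1 := by
    rw [Real.div_rpow ha.le hc.le, Real.div_rpow hb.le hc.le, ← add_div, heq,
      div_self hcr.ne']
  have h2 : (a / c) ^ r ≤ (a / c) ^ t :=
    Real.rpow_le_rpow_of_exponent_ge (div_pos ha hc) (by
      rw [div_le_one hc]; exact hac.le) htr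
  have h3 : (b / c) ^ r ≤ (b / c) ^ t :=
    Real.rpow_le_rpow_of_exponent_ge (div_pos hb hc) (by
      rw [div_le_one hc]; exact hbc.le) htr
  have h4 : (1:ℝ) ≤ (a / c) ^ t + (b / c) ^ t := h1 ▸ add_le_add h2 h3
  rw [Real.div_rpow ha.le hc.le, Real.div_rpow hb.le hc.le, ← add_div,
    le_div_iff₀ hct, one_mul] at h4
  exact h4

/-- Strict comparison: if `a^r + b^r = c^r` with `0 < a,b < c` and `r < t`,
then `a^t + b^t < c^t`. -/
lemma key_lt {a b c r t : ℝ} (ha : 0 < a) (hb : 0 < b) (hac : a < c) (hbc : b < c)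
    (htr : r < t) (heq : a ^ r + b ^ r = c ^ r) :
    a ^ t + b ^ t < c ^ t := by
  have hc : 0 < c := lt_trans ha hac
  have hct : (0:ℝ) < c ^ t := Real.rpow_pos_of_pos hc t
  have hcr : (0:ℝ) < c ^ r := Real.rpow_pos_of_pos hc r
  have h1 : (a / c) ^ r + (b / c) ^ r = 1 := by
    rw [Real.div_rpow ha.le hc.le, Real.div_rpow hb.le hc.le, ← add_div, heq,
      div_self hcr.ne']
  have h2 : (a / c) ^ t < (a / c) ^ r :=
    Real.rpow_lt_rpow_of_exponent_gt (div_pos ha hc) (by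
      rw [div_lt_one hc]; exact hac) htr
  have h3 : (b / c) ^ t < (b / c) ^ r :=
    Real.rpow_lt_rpow_of_exponent_gt (div_pos hb hc) (by
      rw [div_lt_one hc]; exact hbc) htr
  have h4 : (a / c) ^ t + (b / c) ^ t < 1 := h1 ▸ add_lt_add h2 h3
  rw [Real.div_rpow ha.le hc.le, Real.div_rpow hb.le hc.le, ← add_div,
    div_lt_one hct] at h4
  exact h4

/-- Lemma 2.2: `t₀(X) = inf { s(x,y,z) : x,y,z ∈ X }`, where `s(x,y,z)` is
the unique root `s₀ ∈ [1,∞)` of `d(x,z)^s + d(z,y)^s = d(x,y)^s` when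
`max(d(x,z), d(z,y)) < d(x,y)`, and `+∞` otherwise. -/
theorem betweennessExponent_eq_iInf_s {X : Type*} [MetricSpace X] [Nonempty X]
    (s : X → X → X → ENNReal)
    (hs : ∀ x y z : X,
      (max (dist x z) (dist z y) < dist x y →
        ∃ r : ℝ, 1 ≤ r ∧ s x y z = ENNReal.ofReal r ∧
          dist x z ^ r + dist z y ^ r = dist x y ^ r) ∧
      (¬ max (dist x z) (dist z y) < dist x y → s x y z = ⊤)) :
    betweennessExponent X = ⨅ (x : X) (y : X) (z : X), s x y z := by
  -- positivity of side distances when max < dist x y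
  have hpos : ∀ x y z : X, max (dist x z) (dist z y) < dist x y →
      0 < dist x z ∧ 0 < dist z y := by
    intro x y z h
    have htri := dist_triangle x z y
    constructor
    · rcases (dist_nonneg : (0:ℝ) ≤ dist x z).lt_or_eq with h' | h'
      · exact h'
      · exfalso
        have : dist x y ≤ dist z y := by rw [← h'] at htri; linarith
        exact absurd (lt_of_le_of_lt (le_max_right _ _) h) (not_lt.2 this)
    · rcases (dist_nonneg : (0:ℝ) ≤ dist z y).lt_or_eq with h' | h'
      · exact h'
      · exfalso
        have : dist x y ≤ dist x z := by rw [← h'] at htri; linarith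
        exact absurd (lt_of_le_of_lt (le_max_left _ _) h) (not_lt.2 this)
  -- the key claim: every `t > 0` below the infimum satisfies the triangle inequality
  have claim : ∀ t : ℝ, 0 < t → (ENNReal.ofReal t ≤ ⨅ (x : X) (y : X) (z : X), s x y z) →
      ∀ x y z : X, dist x y ^ t ≤ dist x z ^ t + dist z y ^ t := by
    intro t ht hle x y z
    by_cases hlt : max (dist x z) (dist z y) < dist x y
    · obtain ⟨r, hr1, hsr, heq⟩ := (hs x y z).1 hlt
      obtain ⟨ha, hb⟩ := hpos x y z hlt
      have h1 : ENNReal.ofReal t ≤ s x y z :=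
        le_trans hle (le_trans (iInf_le _ x) (le_trans (iInf_le _ y) (iInf_le _ z)))
      rw [hsr, ENNReal.ofReal_le_ofReal_iff (le_trans zero_le_one hr1)] at h1
      exact key_le ha hb (lt_of_le_of_lt (le_max_left _ _) hlt)
        (lt_of_le_of_lt (le_max_right _ _) hlt) ht.le h1 heq
    · push_neg at hlt
      rcases le_total (dist x z) (dist z y) with h | h
      · rw [max_eq_right h] at hlt
        calc dist x y ^ t ≤ dist z y ^ t :=
              Real.rpow_le_rpow dist_nonneg hlt ht.le
          _ ≤ dist x z ^ t + dist z y ^ t :=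
              le_add_of_nonneg_left (Real.rpow_nonneg dist_nonneg t)
      · rw [max_eq_left h] at hlt
        calc dist x y ^ t ≤ dist x z ^ t :=
              Real.rpow_le_rpow dist_nonneg hlt ht.le
          _ ≤ dist x z ^ t + dist z y ^ t :=
              le_add_of_nonneg_right (Real.rpow_nonneg dist_nonneg t)
  apply le_antisymm
  · -- sSup ≤ iInf
    apply sSup_le
    rintro _ ⟨t, ⟨ht, htri⟩, rfl⟩
    refine le_iInf fun x => le_iInf fun y => le_iInf fun z => ?_
    by_cases hlt : max (dist x z) (dist z y) < dist x y
    · obtain ⟨r, hr1, hsr, heq⟩ := (hs x y z).1 hlt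
      obtain ⟨ha, hb⟩ := hpos x y z hlt
      rw [hsr, ENNReal.ofReal_le_ofReal_iff (le_trans zero_le_one hr1)]
      by_contra hrt
      push_neg at hrt
      exact absurd (htri x y z)
        (not_le.2 (key_lt ha hb (lt_of_le_of_lt (le_max_left _ _) hlt)
          (lt_of_le_of_lt (le_max_right _ _) hlt) hrt heq))
    · rw [(hs x y z).2 hlt]; exact le_top
  · -- iInf ≤ sSup
    have h1le : (1 : ENNReal) ≤ ⨅ (x : X) (y : X) (z : X), s x y z := by
      refine le_iInf fun x => le_iInf fun y => le_iInf fun z => ?_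
      by_cases hlt : max (dist x z) (dist z y) < dist x y
      · obtain ⟨r, hr1, hsr, _⟩ := (hs x y z).1 hlt
        rw [hsr]
        exact ENNReal.one_le_ofReal.2 hr1
      · rw [(hs x y z).2 hlt]; exact le_top
    by_cases htop : (⨅ (x : X) (y : X) (z : X), s x y z) = ⊤
    · rw [htop]
      by_contra hne
      have hne' : betweennessExponent X ≠ ⊤ := fun h => hne h.ge
      obtain ⟨n, hn⟩ := ENNReal.exists_nat_gt hne'
      have hn0 : (0:ℝ) < (n:ℝ) + 1 := by positivity
      have hmem : ENNReal.ofReal ((n:ℝ) + 1) ∈ ENNReal.ofReal ''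
          {t : ℝ | 0 < t ∧ ∀ x y z : X, dist x y ^ t ≤ dist x z ^ t + dist z y ^ t} :=
        ⟨(n:ℝ) + 1, ⟨hn0, claim _ hn0 (htop ▸ le_top)⟩, rfl⟩
      have : ENNReal.ofReal ((n:ℝ) + 1) ≤ betweennessExponent X := le_sSup hmem
      have hcast : (n : ENNReal) ≤ ENNReal.ofReal ((n:ℝ) + 1) := by
        rw [← ENNReal.ofReal_natCast n]
        exact ENNReal.ofReal_le_ofReal (by linarith)
      exact absurd (le_trans hcast this) (not_le.2 hn)
    · set I := ⨅ (x : X) (y : X) (z : X), s x y z with hI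
      have hρ : ENNReal.ofReal I.toReal = I := ENNReal.ofReal_toReal htop
      have hρ1 : (1:ℝ) ≤ I.toReal := by
        have := ENNReal.toReal_mono htop h1le
        simpa using this
      have hρ0 : (0:ℝ) < I.toReal := lt_of_lt_of_le zero_lt_one hρ1
      have hmem : ENNReal.ofReal I.toReal ∈ ENNReal.ofReal ''
          {t : ℝ | 0 < t ∧ ∀ x y z : X, dist x y ^ t ≤ dist x z ^ t + dist z y ^ t} :=
        ⟨I.toReal, ⟨hρ0, claim _ hρ0 hρ.le⟩, rfl⟩
      calc I = ENNReal.ofReal I.toReal := hρ.symm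
        _ ≤ betweennessExponent X := le_sSup hmem
end

section
/- Every metric space Y in the class 𝔐 with at least 5 points is isometric to a subset of ℝ. -/
set_option maxHeartbeats 4000000

/-- Menger's theorem (special case): every metric space in the class 𝔐
(`d(x,z) ≥ d(x,y) ≥ d(y,z)` implies `d(x,z) = d(x,y) + d(y,z)`) having at
least 5 points is isometric to a subset of ℝ. -/
theorem menger_embedding {Y : Type*} [MetricSpace Y]
    (hM : ∀ x y z : Y, dist y z ≤ dist x y → dist x y ≤ dist x z →
      dist x z = dist x y + dist y z)
    (h5 : ∃ f : Fin 5 → Y, Function.Injective f) :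
    ∃ g : Y → ℝ, ∀ a b : Y, dist (g a) (g b) = dist a b := by
  classical
  obtain ⟨f, hf⟩ := h5
  set p := f 0 with hp
  set q := f 1 with hq
  have hpq : p ≠ q := fun h => absurd (hf h) (by decide)
  have hD : 0 < dist p q := dist_pos.2 hpq
  -- every triple is "linear": one distance is the sum of the other two
  have col : ∀ x y z : Y, dist x z = dist x y + dist y z ∨
      dist x y = dist x z + dist y z ∨ dist y z = dist x y + dist x z := by
    intro x y z
    have cxy := dist_comm x y
    have cyz := dist_comm y z
    have cxz := dist_comm x z
    rcases le_total (dist x y) (dist y z) with h1 | h1 <;>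
      rcases le_total (dist y z) (dist x z) with h2 | h2 <;>
      rcases le_total (dist x y) (dist x z) with h3 | h3 <;>
      first
        | (have h := hM x y z (by linarith) (by linarith);
           first | (left; linarith) | (right; left; linarith) | (right; right; linarith))
        | (have h := hM x z y (by linarith) (by linarith);
           first | (left; linarith) | (right; left; linarith) | (right; right; linarith))
        | (have h := hM y x z (by linarith) (by linarith);
           first | (left; linarith) | (right; left; linarith) | (right; right; linarith))
        | (have h := hM y z x (by linarith) (by linarith);
           first | (left; linarith) | (right; left; linarith) | (right; right; linarith))
        | (have h := hM z x y (by linarith) (by linarith);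
           first | (left; linarith) | (right; left; linarith) | (right; right; linarith))
        | (have h := hM z y x (by linarith) (by linarith);
           first | (left; linarith) | (right; left; linarith) | (right; right; linarith))
  -- the candidate embedding
  let gf : Y → ℝ := fun a => ((dist p a)^2 - (dist q a)^2) / (2 * dist p q)
  have hval : ∀ a : Y, gf a = ((dist p a)^2 - (dist q a)^2) / (2 * dist p q) :=
    fun _ => rfl
  have h2D : (2 * dist p q) ≠ 0 := by positivity
  -- key sign facts
  have key : ∀ a : Y,
      (gf a + dist p q / 2 = dist p a ∨ gf a + dist p q / 2 = -dist p a) ∧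
      (gf a - dist p q / 2 = dist q a ∨ gf a - dist p q / 2 = -dist q a) := by
    intro a
    have caq := dist_comm a q
    rcases col p a q with h | h | h
    · have hv : dist q a = dist p q - dist p a := by linarith
      have hga : gf a = dist p a - dist p q / 2 := by
        rw [hval a, div_eq_iff h2D]
        linear_combination (dist p a - dist p q - dist q a) * hv
      exact ⟨Or.inl (by linarith), Or.inr (by linarith)⟩
    · have hv : dist q a = dist p a - dist p q := by linarith
      have hga : gf a = dist p a - dist p q / 2 := by
        rw [hval a, div_eq_iff h2D]
        linear_combination (-(dist p a - dist p q + dist q a)) * hv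
      exact ⟨Or.inl (by linarith), Or.inl (by linarith)⟩
    · have hv : dist q a = dist p a + dist p q := by linarith
      have hga : gf a = -dist p a - dist p q / 2 := by
        rw [hval a, div_eq_iff h2D]
        linear_combination (-(dist p a + dist p q + dist q a)) * hv
      exact ⟨Or.inr (by linarith), Or.inr (by linarith)⟩
  -- main dichotomy for a pair of points
  have gob : ∀ a b : Y,
      (gf a - gf b = dist a b ∨ gf b - gf a = dist a b) ∨
      (gf a + gf b = 0 ∧ dist a b = dist p q) := by
    intro a b
    obtain ⟨ka1, ka2⟩ := key a
    obtain ⟨kb1, kb2⟩ := key b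
    have t3 := col p a b
    have t4 := col q a b
    have n1 : (0:ℝ) ≤ dist a b := dist_nonneg
    have n2 : (0:ℝ) ≤ dist p a := dist_nonneg
    have n3 : (0:ℝ) ≤ dist q a := dist_nonneg
    have n4 : (0:ℝ) ≤ dist p b := dist_nonneg
    have n5 : (0:ℝ) ≤ dist q b := dist_nonneg
    rcases ka1 with ka1 | ka1 <;> rcases ka2 with ka2 | ka2 <;>
      rcases kb1 with kb1 | kb1 <;> rcases kb2 with kb2 | kb2 <;>
      rcases t3 with t3 | t3 | t3 <;> rcases t4 with t4 | t4 | t4 <;>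
      first
        | (left; left; linarith)
        | (left; right; linarith)
        | (right; exact ⟨by linarith, by linarith⟩)
  -- a fifth point avoiding any four given points
  have hz5 : ∀ a b : Y, ∃ z : Y, z ≠ p ∧ z ≠ q ∧ z ≠ a ∧ z ≠ b := by
    intro a b
    by_contra hno
    push_neg at hno
    have hmem : ∀ i : Fin 5, f i ∈ ({p, q, a, b} : Finset Y) := by
      intro i
      simp only [Finset.mem_insert, Finset.mem_singleton]
      by_cases h1 : f i = p; · tauto
      by_cases h2 : f i = q; · tauto
      by_cases h3 : f i = a; · tauto
      exact Or.inr (Or.inr (Or.inr (hno _ h1 h2 h3)))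
    have hcard := Finset.card_le_card_of_injOn (s := (Finset.univ : Finset (Fin 5))) (t := ({p, q, a, b} : Finset Y)) f (fun i _ => hmem i) hf.injOn
    have c1 := Finset.card_insert_le p ({q, a, b} : Finset Y)
    have c2 := Finset.card_insert_le q ({a, b} : Finset Y)
    have c3 := Finset.card_insert_le a ({b} : Finset Y)
    have c4 : ({b} : Finset Y).card = 1 := Finset.card_singleton b
    have c5 : (Finset.univ : Finset (Fin 5)).card = 5 := by simp
    omega
  -- the embedding works
  have H : ∀ a b : Y, gf a - gf b = dist a b ∨ gf b - gf a = dist a b := by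
    intro a b
    rcases gob a b with h | ⟨hsum, he⟩
    · exact h
    by_contra hcon
    push_neg at hcon
    obtain ⟨h1, h2⟩ := hcon
    obtain ⟨z, hzp, hzq, hza, hzb⟩ := hz5 a b
    have hpz : 0 < dist p z := dist_pos.2 fun h => hzp h.symm
    have hqz : 0 < dist q z := dist_pos.2 fun h => hzq h.symm
    have haz : 0 < dist a z := dist_pos.2 fun h => hza h.symm
    have hbz : 0 < dist b z := dist_pos.2 fun h => hzb h.symm
    have czb := dist_comm z b
    rcases gob a z with gaz | ⟨saz, eaz⟩ <;> rcases gob b z with gbz | ⟨sbz, ebz⟩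
    · -- both pairs good: contradiction via triple (a, z, b) and key z
      obtain ⟨kz1, kz2⟩ := key z
      have t := col a z b
      have h1' := lt_or_gt_of_ne h1
      have h2' := lt_or_gt_of_ne h2
      rcases gaz with gaz | gaz <;> rcases gbz with gbz | gbz <;>
        rcases t with t | t | t <;> rcases kz1 with kz1 | kz1 <;>
        rcases kz2 with kz2 | kz2 <;> rcases h1' with h1' | h1' <;>
        rcases h2' with h2' | h2' <;> linarith
    · -- (b,z) bad: gf z = gf a, so dist a z = 0, contradiction
      rcases gaz with gaz | gaz <;> linarith
    · -- (a,z) bad: gf z = gf b, so dist b z = 0, contradiction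
      rcases gbz with gbz | gbz <;> linarith
    · -- both bad: equilateral triangle of side dist p q > 0
      rcases col a z b with t | t | t <;> linarith
  refine ⟨gf, fun a b => ?_⟩
  rw [Real.dist_eq]
  rcases H a b with h | h
  · rw [h, abs_of_nonneg dist_nonneg]
  · rw [abs_sub_comm, h, abs_of_nonneg dist_nonneg]
end

section
/- If Y ∈ 𝔐 and f : ℝ → Y is an isometric embedding, then f is surjective (hence an isometry). -/
/-- If `Y ∈ 𝔐` and `f : ℝ → Y` is an isometric embedding, then `f` is
surjective (hence an isometry). -/
theorem isometric_embedding_of_real_surjective {Y : Type*} [MetricSpace Y]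
    (hM : ∀ x y z : Y, dist y z ≤ dist x y → dist x y ≤ dist x z →
      dist x z = dist x y + dist y z)
    (f : ℝ → Y) (hf : ∀ a b : ℝ, dist (f a) (f b) = dist a b) :
    Function.Surjective f := by
  intro y
  have hd0 : 0 ≤ dist (f 0) y := dist_nonneg
  set d := dist (f 0) y with hd
  have hfd : dist (f 0) (f d) = d := by
    rw [hf]; simp [Real.dist_eq, abs_of_nonneg hd0]
  have hfnd : dist (f 0) (f (-d)) = d := by
    rw [hf]; simp [Real.dist_eq, abs_of_nonneg hd0]
  have hfdd : dist (f (-d)) (f d) = 2 * d := by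
    rw [hf, Real.dist_eq, abs_of_nonpos (by linarith : (-d) - d ≤ 0)]; ring
  have c1 : dist (f d) (f 0) = d := by rw [dist_comm]; exact hfd
  have c2 : dist (f (-d)) (f 0) = d := by rw [dist_comm]; exact hfnd
  by_cases h1 : dist y (f d) ≤ d
  · refine ⟨d, ?_⟩
    have h := hM (f 0) y (f d) (by linarith) (by linarith)
    have : dist y (f d) = 0 := by linarith
    exact (dist_eq_zero.mp this).symm
  · push_neg at h1
    have hc : dist y (f d) = dist (f d) y := dist_comm y (f d)
    have e1 : dist (f d) y = 2 * d := by
      have h := hM (f d) (f 0) y (by linarith) (by linarith)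
      linarith
    by_cases h2 : dist y (f (-d)) ≤ d
    · refine ⟨-d, ?_⟩
      have h := hM (f 0) y (f (-d)) (by linarith) (by linarith)
      have : dist y (f (-d)) = 0 := by linarith
      exact (dist_eq_zero.mp this).symm
    · push_neg at h2
      have hc2 : dist y (f (-d)) = dist (f (-d)) y := dist_comm y (f (-d))
      have e2 : dist (f (-d)) y = 2 * d := by
        have h := hM (f (-d)) (f 0) y (by linarith) (by linarith)
        linarith
      have h := hM (f (-d)) y (f d) (by linarith) (by linarith)
      exact ⟨0, dist_eq_zero.mp (by linarith)⟩
end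

section
/- A metric space (X, d) belongs to the class 𝔐 if and only if for every subset Y ⊆ X with at least 3 points, the betweenness exponent t₀(Y) equals 1. -/
open Real

private lemma rpow_add_lt_of_one_lt {a b t : ℝ} (ha : 0 < a) (hb : 0 < b) (ht : 1 < t) :
    a ^ t + b ^ t < (a + b) ^ t := by
  have hab : 0 < a + b := by linarith
  have ea : a ^ t = a * a ^ (t - 1) := by
    nth_rewrite 1 [show t = 1 + (t - 1) by ring]
    rw [Real.rpow_add ha, Real.rpow_one]
  have eb : b ^ t = b * b ^ (t - 1) := by
    nth_rewrite 1 [show t = 1 + (t - 1) by ring]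
    rw [Real.rpow_add hb, Real.rpow_one]
  have eab : (a + b) ^ t = (a + b) * (a + b) ^ (t - 1) := by
    nth_rewrite 1 [show t = 1 + (t - 1) by ring]
    rw [Real.rpow_add hab, Real.rpow_one]
  have h1 : a ^ (t - 1) < (a + b) ^ (t - 1) :=
    Real.rpow_lt_rpow ha.le (by linarith) (by linarith)
  have h2 : b ^ (t - 1) < (a + b) ^ (t - 1) :=
    Real.rpow_lt_rpow hb.le (by linarith) (by linarith)
  calc a ^ t + b ^ t = a * a ^ (t - 1) + b * b ^ (t - 1) := by rw [ea, eb]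
    _ < a * (a + b) ^ (t - 1) + b * (a + b) ^ (t - 1) :=
        add_lt_add (mul_lt_mul_of_pos_left h1 ha) (mul_lt_mul_of_pos_left h2 hb)
    _ = (a + b) ^ t := by rw [eab]; ring

private lemma exists_t_gt_one {a b c : ℝ} (hc : 0 < c) (hcb : c ≤ b) (hba : b ≤ a)
    (h : a < b + c) : ∃ t : ℝ, 1 < t ∧ a ^ t ≤ b ^ t + c ^ t := by
  have ha : 0 < a := lt_of_lt_of_le hc (hcb.trans hba)
  have hb : 0 < b := lt_of_lt_of_le hc hcb
  have cont : ∀ x : ℝ, 0 < x → Continuous fun t : ℝ => x ^ t := by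
    intro x hx
    simp only [Real.rpow_def_of_pos hx]
    exact Real.continuous_exp.comp (continuous_const.mul continuous_id)
  have cf : Continuous fun t : ℝ => b ^ t + c ^ t - a ^ t :=
    ((cont b hb).add (cont c hc)).sub (cont a ha)
  have h0 : (0 : ℝ) < b ^ (1 : ℝ) + c ^ (1 : ℝ) - a ^ (1 : ℝ) := by
    simp only [Real.rpow_one]; linarith
  have hev : ∀ᶠ t in nhds (1 : ℝ), 0 < b ^ t + c ^ t - a ^ t :=
    (cf.continuousAt (x := 1)).eventually (eventually_gt_nhds h0)
  have hev' := hev.filter_mono (nhdsWithin_le_nhds (s := Set.Ioi (1 : ℝ)))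
  obtain ⟨t, ht⟩ := (hev'.and eventually_mem_nhdsWithin).exists
  exact ⟨t, ht.2, by linarith [ht.1]⟩

private lemma exists_ordered {Z : Type*} [MetricSpace Z] (p q r : Z)
    (hpq : p ≠ q) (hqr : q ≠ r) (_hpr : p ≠ r) :
    ∃ x y z : Z, x ≠ y ∧ y ≠ z ∧ dist y z ≤ dist x y ∧ dist x y ≤ dist x z := by
  rcases le_total (dist p q) (dist q r) with h1 | h1 <;>
    rcases le_total (dist q r) (dist p r) with h2 | h2 <;>
    rcases le_total (dist p q) (dist p r) with h3 | h3
  · exact ⟨r, q, p, hqr.symm, hpq.symm,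
      by simpa [dist_comm] using h1, by simpa [dist_comm] using h2⟩
  · exact ⟨r, q, p, hqr.symm, hpq.symm,
      by simpa [dist_comm] using h1, by simpa [dist_comm] using h2⟩
  · exact ⟨r, p, q, (_hpr).symm, hpq,
      by simpa [dist_comm] using h3, by simpa [dist_comm] using h2⟩
  · exact ⟨q, p, r, hpq.symm, _hpr,
      by simpa [dist_comm] using h3, by simpa [dist_comm] using h1⟩
  · exact ⟨p, q, r, hpq, hqr, by simpa [dist_comm] using h1, by simpa [dist_comm] using h3⟩
  · exact ⟨p, r, q, _hpr, hqr.symm,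
      by simpa [dist_comm] using h2, by simpa [dist_comm] using h3⟩
  · exact ⟨p, q, r, hpq, hqr, by simpa [dist_comm] using h1, by simpa [dist_comm] using h3⟩
  · exact ⟨q, r, p, hqr, _hpr.symm,
      by simpa [dist_comm] using h2, by simpa [dist_comm] using h1⟩

/-- `X ∈ 𝔐` if and only if every subset `Y ⊆ X` with at least 3 points has
betweenness exponent `t₀(Y) = 1`. -/
theorem mem_M_iff_betweennessExponent_subsets_eq_one
    {X : Type*} [MetricSpace X] :
    (∀ x y z : X, dist y z ≤ dist x y → dist x y ≤ dist x z →
      dist x z = dist x y + dist y z) ↔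
    ∀ Y : Set X, (∃ f : Fin 3 → Y, Function.Injective f) →
      betweennessExponent Y = 1 := by
  constructor
  · intro hM Y hY
    obtain ⟨f, hf⟩ := hY
    refine le_antisymm ?_ ?_
    · apply sSup_le
      rintro e ⟨t, ⟨ht0, hprop⟩, rfl⟩
      by_cases hle : t ≤ 1
      · exact ENNReal.ofReal_le_one.mpr hle
      push_neg at hle
      exfalso
      have h01 : f 0 ≠ f 1 := fun h => absurd (hf h) (by decide)
      have h12 : f 1 ≠ f 2 := fun h => absurd (hf h) (by decide)
      have h02 : f 0 ≠ f 2 := fun h => absurd (hf h) (by decide)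
      obtain ⟨x, y, z, hxy, hyz, hd1, hd2⟩ := exists_ordered (f 0) (f 1) (f 2) h01 h12 h02
      have heq : dist x z = dist x y + dist y z := by
        simp only [Subtype.dist_eq]
        exact hM _ _ _ (by simpa only [Subtype.dist_eq] using hd1)
          (by simpa only [Subtype.dist_eq] using hd2)
      have hstrict : dist x y ^ t + dist y z ^ t < dist x z ^ t := by
        rw [heq]
        exact rpow_add_lt_of_one_lt (dist_pos.2 hxy) (dist_pos.2 hyz) hle
      linarith [hprop x z y]
    · apply le_sSup
      refine ⟨1, ⟨one_pos, fun u v w => ?_⟩, ENNReal.ofReal_one⟩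
      simp only [Real.rpow_one]
      exact dist_triangle u w v
  · intro h x y z hd1 hd2
    by_cases hxy : x = y
    · subst hxy; simp
    by_cases hyz : y = z
    · subst hyz; simp
    by_cases hxz : x = z
    · exfalso
      rw [hxz, dist_self] at hd2
      exact hyz (dist_le_zero.mp hd2).symm
    by_contra hne
    have hlt : dist x z < dist x y + dist y z :=
      lt_of_le_of_ne (dist_triangle x y z) hne
    have hc : 0 < dist y z := dist_pos.2 hyz
    obtain ⟨t, ht1, habc⟩ := exists_t_gt_one hc hd1 hd2 hlt
    have ht0 : t ≠ 0 := by positivity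
    set Y : Set X := {x, y, z} with hYdef
    have mx : x ∈ Y := by simp [hYdef]
    have my : y ∈ Y := by simp [hYdef]
    have mz : z ∈ Y := by simp [hYdef]
    have hexists : ∃ f : Fin 3 → Y, Function.Injective f := by
      refine ⟨![⟨x, mx⟩, ⟨y, my⟩, ⟨z, mz⟩], ?_⟩
      intro i j hij
      have h' : ((![⟨x, mx⟩, ⟨y, my⟩, ⟨z, mz⟩] i : Y) : X) =
          ((![⟨x, mx⟩, ⟨y, my⟩, ⟨z, mz⟩] j : Y) : X) := congrArg Subtype.val hij
      clear hij
      fin_cases i <;> fin_cases j <;> simp only [Matrix.cons_val_zero, Matrix.cons_val_one,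
          Matrix.head_cons, Matrix.cons_val_two, Matrix.tail_cons] at h' <;>
        first
          | rfl
          | exact absurd h' hxy | exact absurd h' hyz | exact absurd h' hxz
          | exact absurd h'.symm hxy | exact absurd h'.symm hyz | exact absurd h'.symm hxz
    have hY1 := h Y hexists
    have hkey : ∀ p q r : X, p ∈ Y → q ∈ Y → r ∈ Y →
        dist p q ^ t ≤ dist p r ^ t + dist r q ^ t := by
      intro p q r hp hq hr
      have hB : dist x y ^ t ≤ dist x z ^ t := Real.rpow_le_rpow dist_nonneg hd2 (by linarith)
      have hC : dist y z ^ t ≤ dist x y ^ t := Real.rpow_le_rpow dist_nonneg hd1 (by linarith)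
      have n1 : (0 : ℝ) ≤ dist x y ^ t := Real.rpow_nonneg dist_nonneg t
      have n2 : (0 : ℝ) ≤ dist y z ^ t := Real.rpow_nonneg dist_nonneg t
      have n3 : (0 : ℝ) ≤ dist x z ^ t := Real.rpow_nonneg dist_nonneg t
      simp only [hYdef, Set.mem_insert_iff, Set.mem_singleton_iff] at hp hq hr
      rcases hp with hp | hp | hp <;> rcases hq with hq | hq | hq <;>
        rcases hr with hr | hr | hr <;> rw [hp, hq, hr] <;>
        (try simp only [dist_self, Real.zero_rpow ht0, dist_comm y x, dist_comm z x,
          dist_comm z y]) <;>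
        linarith
    have hmem : ENNReal.ofReal t ∈ ENNReal.ofReal ''
        {s : ℝ | 0 < s ∧ ∀ u v w : Y, dist u v ^ s ≤ dist u w ^ s + dist w v ^ s} := by
      refine ⟨t, ⟨by linarith, fun u v w => ?_⟩, rfl⟩
      simp only [Subtype.dist_eq]
      exact hkey _ _ _ u.2 v.2 w.2
    have hle : ENNReal.ofReal t ≤ 1 := by
      rw [← hY1]; exact le_sSup hmem
    exact absurd hle (not_le.mpr (ENNReal.one_lt_ofReal.mpr ht1))
end

section
/- Let (X, d) be a metric space with a point p, and suppose lim_{x,y → p} F(x,y) = 0, where F(x,y) = d(x,y)·min(d(x,p), d(y,p)) / max(d(x,p), d(y,p))² (and F(p,p) = 0). Then for any two sequences x̃ = (xₙ), ỹ = (yₙ) converging to p that are mutually stable with respect to a normalizing sequence (rₙ), and mutually stable with the constant sequence p̃, with d̃(x̃, p̃) ≤ d̃(ỹ, p̃): if d̃(ỹ, p̃) > 0 then d̃(x̃, ỹ)·d̃(x̃, p̃) = 0. In particular, every pretangent space Ω^X_{p,r̃} has at most 2 points. -/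
open Filter Topology

open Classical in
/-- The function `F(x,y) = d(x,y)·min(d(x,p),d(y,p)) / max(d(x,p),d(y,p))²`
for `(x,y) ≠ (p,p)`, with `F(p,p) = 0`. -/
noncomputable def Fp {X : Type*} [MetricSpace X] (p x y : X) : ℝ :=
  if (x, y) = (p, p) then 0
  else dist x y * min (dist x p) (dist y p) / (max (dist x p) (dist y p)) ^ 2

lemma Fp_eq {X : Type*} [MetricSpace X] (p x y : X) :
    Fp p x y = dist x y * min (dist x p) (dist y p) / (max (dist x p) (dist y p)) ^ 2 := by
  unfold Fp
  split
  · rename_i h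
    simp only [Prod.mk.injEq] at h
    simp [h.1, h.2]
  · rfl

lemma Fp_scale {X : Type*} [MetricSpace X] (p x y : X) (r : ℝ) (hr : 0 < r) :
    Fp p x y = ((dist x y / r) * min (dist x p / r) (dist y p / r)) /
      (max (dist x p / r) (dist y p / r)) ^ 2 := by
  rw [Fp_eq, min_div_div_right hr.le, max_div_div_right hr.le]
  set a := dist x y
  set b := dist x p
  set c := dist y p
  have hM0 : (0:ℝ) ≤ max b c := le_max_of_le_left dist_nonneg
  rcases eq_or_lt_of_le hM0 with hM | hM
  · have hb : b = 0 := le_antisymm (hM ▸ le_max_left b c) dist_nonneg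
    have hc : c = 0 := le_antisymm (hM ▸ le_max_right b c) dist_nonneg
    rw [hb, hc]; simp
  · have hMne : max b c ≠ 0 := hM.ne'
    have hrne : r ≠ 0 := hr.ne'
    field_simp


/-- If `lim_{x,y → p} F(x,y) = 0` then for sequences `x̃, ỹ` converging to
`p`, mutually stable w.r.t. a normalizing sequence and mutually stable with
the constant sequence `p̃`, with `d̃(x̃,p̃) ≤ d̃(ỹ,p̃)`: if `d̃(ỹ,p̃) > 0`
then `d̃(x̃,ỹ)·d̃(x̃,p̃) = 0`. In particular, among any three members of a
self-stable family some two are at limit distance 0, i.e. every pretangent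
space `Ω^X_{p,r̃}` has at most two points. -/
theorem pretangent_two_points_of_F_tendsto_zero {X : Type*} [MetricSpace X]
    (p : X)
    (hF : Tendsto (fun q : X × X => Fp p q.1 q.2) (𝓝 (p, p)) (𝓝 0))
    (r : ℕ → ℝ) (hr : ∀ n, 0 < r n) (hr0 : Tendsto r atTop (𝓝 0)) :
    (∀ x y : ℕ → X, Tendsto x atTop (𝓝 p) → Tendsto y atTop (𝓝 p) →
      ∀ dxy dxp dyp : ℝ,
        Tendsto (fun n => dist (x n) (y n) / r n) atTop (𝓝 dxy) →
        Tendsto (fun n => dist (x n) p / r n) atTop (𝓝 dxp) →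
        Tendsto (fun n => dist (y n) p / r n) atTop (𝓝 dyp) →
        dxp ≤ dyp → 0 < dyp → dxy * dxp = 0) ∧
    (∀ x y z : ℕ → X, ∀ dxy dxz dyz dxp dyp dzp : ℝ,
      Tendsto (fun n => dist (x n) (y n) / r n) atTop (𝓝 dxy) →
      Tendsto (fun n => dist (x n) (z n) / r n) atTop (𝓝 dxz) →
      Tendsto (fun n => dist (y n) (z n) / r n) atTop (𝓝 dyz) →
      Tendsto (fun n => dist (x n) p / r n) atTop (𝓝 dxp) →
      Tendsto (fun n => dist (y n) p / r n) atTop (𝓝 dyp) →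
      Tendsto (fun n => dist (z n) p / r n) atTop (𝓝 dzp) →
      dxy = 0 ∨ dxz = 0 ∨ dyz = 0) := by
  -- Part 1
  have part1 : ∀ x y : ℕ → X, Tendsto x atTop (𝓝 p) → Tendsto y atTop (𝓝 p) →
      ∀ dxy dxp dyp : ℝ,
        Tendsto (fun n => dist (x n) (y n) / r n) atTop (𝓝 dxy) →
        Tendsto (fun n => dist (x n) p / r n) atTop (𝓝 dxp) →
        Tendsto (fun n => dist (y n) p / r n) atTop (𝓝 dyp) →
        dxp ≤ dyp → 0 < dyp → dxy * dxp = 0 := by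
    intro x y hx hy dxy dxp dyp h1 h2 h3 hle hpos
    have hseq0 : Tendsto (fun n => Fp p (x n) (y n)) atTop (𝓝 0) :=
      hF.comp (hx.prodMk_nhds hy)
    have hnum : Tendsto (fun n => (dist (x n) (y n) / r n) *
        min (dist (x n) p / r n) (dist (y n) p / r n)) atTop (𝓝 (dxy * dxp)) := by
      have := h1.mul (h2.min h3)
      rwa [min_eq_left hle] at this
    have hden : Tendsto (fun n => (max (dist (x n) p / r n) (dist (y n) p / r n)) ^ 2)
        atTop (𝓝 (dyp ^ 2)) := by
      have := (h2.max h3).pow 2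
      rwa [max_eq_right hle] at this
    have hseqL : Tendsto (fun n => Fp p (x n) (y n)) atTop (𝓝 (dxy * dxp / dyp ^ 2)) := by
      refine Tendsto.congr (fun n => ?_) (hnum.div hden (by positivity))
      exact (Fp_scale p (x n) (y n) (r n) (hr n)).symm
    have hu := tendsto_nhds_unique hseqL hseq0
    have h2' : dyp ^ 2 ≠ 0 := by positivity
    rcases (div_eq_zero_iff.mp hu) with h | h
    · exact h
    · exact absurd h h2'
  refine ⟨part1, ?_⟩
  -- convergence to p from scaled limits
  have conv : ∀ (a : ℕ → X) (dap : ℝ),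
      Tendsto (fun n => dist (a n) p / r n) atTop (𝓝 dap) → Tendsto a atTop (𝓝 p) := by
    intro a dap h
    rw [tendsto_iff_dist_tendsto_zero]
    have : Tendsto (fun n => (dist (a n) p / r n) * r n) atTop (𝓝 (dap * 0)) := h.mul hr0
    rw [mul_zero] at this
    refine this.congr fun n => ?_
    exact div_mul_cancel₀ _ (hr n).ne'
  have nonneg : ∀ (a b : ℕ → X) (dab : ℝ),
      Tendsto (fun n => dist (a n) (b n) / r n) atTop (𝓝 dab) → 0 ≤ dab := by
    intro a b dab h
    exact ge_of_tendsto' h fun n => div_nonneg dist_nonneg (hr n).le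
  -- if both are at limit distance 0 from p, limit distance between them is 0
  have Z : ∀ (a b : ℕ → X) (dab dap dbp : ℝ),
      Tendsto (fun n => dist (a n) (b n) / r n) atTop (𝓝 dab) →
      Tendsto (fun n => dist (a n) p / r n) atTop (𝓝 dap) →
      Tendsto (fun n => dist (b n) p / r n) atTop (𝓝 dbp) →
      dap = 0 → dbp = 0 → dab = 0 := by
    intro a b dab dap dbp h1 h2 h3 hap hbp
    have hsum : Tendsto (fun n => dist (a n) p / r n + dist (b n) p / r n) atTop (𝓝 0) := by
      have := h2.add h3
      rwa [hap, hbp, add_zero] at this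
    have hle : dab ≤ 0 := by
      refine le_of_tendsto_of_tendsto' h1 hsum fun n => ?_
      rw [← add_div]
      refine (div_le_div_iff_of_pos_right (hr n)).mpr ?_
      calc dist (a n) (b n) ≤ dist (a n) p + dist p (b n) := dist_triangle _ _ _
        _ = dist (a n) p + dist (b n) p := by rw [dist_comm p]
    exact le_antisymm hle (nonneg a b dab h1)
  -- key lemma: dab * min dap dbp = 0 always
  have K : ∀ (a b : ℕ → X) (dab dap dbp : ℝ),
      Tendsto (fun n => dist (a n) (b n) / r n) atTop (𝓝 dab) →
      Tendsto (fun n => dist (a n) p / r n) atTop (𝓝 dap) →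
      Tendsto (fun n => dist (b n) p / r n) atTop (𝓝 dbp) →
      dab * min dap dbp = 0 := by
    intro a b dab dap dbp h1 h2 h3
    have ha := conv a dap h2
    have hb := conv b dbp h3
    have h1' : Tendsto (fun n => dist (b n) (a n) / r n) atTop (𝓝 dab) := by
      simpa only [dist_comm] using h1
    have hbp0 : 0 ≤ dbp := nonneg b (fun _ => p) dbp h3
    have hap0 : 0 ≤ dap := nonneg a (fun _ => p) dap h2
    rcases le_total dap dbp with hle | hle
    · rw [min_eq_left hle]
      rcases eq_or_lt_of_le hbp0 with h0 | h0
      · have hap : dap = 0 := le_antisymm (hle.trans h0.symm.le) hap0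
        rw [hap, mul_zero]
      · exact part1 a b ha hb dab dap dbp h1 h2 h3 hle h0
    · rw [min_eq_right hle]
      rcases eq_or_lt_of_le hap0 with h0 | h0
      · have hbp : dbp = 0 := le_antisymm (hle.trans h0.symm.le) hbp0
        rw [hbp, mul_zero]
      · exact part1 b a hb ha dab dbp dap h1' h3 h2 hle h0
  intro x y z dxy dxz dyz dxp dyp dzp hxy hxz hyz hxp hyp hzp
  have k1 := K x y dxy dxp dyp hxy hxp hyp
  have k2 := K x z dxz dxp dzp hxz hxp hzp
  have k3 := K y z dyz dyp dzp hyz hyp hzp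
  by_contra hcon
  push_neg at hcon
  obtain ⟨n1, n2, n3⟩ := hcon
  have m1 : min dxp dyp = 0 := (mul_eq_zero.mp k1).resolve_left n1
  have m2 : min dxp dzp = 0 := (mul_eq_zero.mp k2).resolve_left n2
  have m3 : min dyp dzp = 0 := (mul_eq_zero.mp k3).resolve_left n3
  have minzero : ∀ u v : ℝ, min u v = 0 → u = 0 ∨ v = 0 := by
    intro u v h
    rcases min_choice u v with hh | hh
    · exact Or.inl (hh.symm.trans h)
    · exact Or.inr (hh.symm.trans h)
  rcases minzero _ _ m1 with hx0 | hy0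
  · rcases minzero _ _ m3 with hy0 | hz0
    · exact n1 (Z x y dxy dxp dyp hxy hxp hyp hx0 hy0)
    · exact n2 (Z x z dxz dxp dzp hxz hxp hzp hx0 hz0)
  · rcases minzero _ _ m2 with hx0 | hz0
    · exact n1 (Z x y dxy dxp dyp hxy hxp hyp hx0 hy0)
    · exact n3 (Z y z dyz dyp dzp hyz hyp hzp hy0 hz0)
end
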